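/- For a binomial random variable S ~ Binomial(n, q) with 0 < q < 1 and integer δ with q·n < δ ≤ n, P(S ≥ δ) ≥ P(S = δ) ≥ (1/√(2n)) · exp(-n · D(δ/n ‖ q)), where D(a‖b) is the binary KL divergence. -/

import Mathlib

section Stmt10Aux

open Real

private lemma stmt10_sqrtpi_le_stirlingSeq (m : ℕ) (hm : 1 ≤ m) :
    Real.sqrt π ≤ Stirling.stirlingSeq m := by
  obtain ⟨j, rfl⟩ := Nat.exists_eq_add_of_le hm
  have h := Antitone.le_of_tendsto Stirling.stirlingSeq'_antitone
    (((Filter.tendsto_add_atTop_iff_nat 1).mpr Stirling.tendsto_stirlingSeq_sqrt_pi)) j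
  simpa [Nat.succ_eq_add_one, add_comm] using h

private lemma stmt10_stirlingSeq_le_two (m : ℕ) (hm : 2 ≤ m) :
    Stirling.stirlingSeq m ≤ Real.exp 1 ^ 2 / 4 := by
  obtain ⟨j, rfl⟩ := Nat.exists_eq_add_of_le hm
  have h := Stirling.stirlingSeq'_antitone (show 1 ≤ 1 + j by omega)
  have h2 : Stirling.stirlingSeq 2 = Real.exp 1 ^ 2 / 4 := by
    have h4 : Real.sqrt (2 * (2:ℕ)) = 2 := by
      rw [show (2 * (2:ℕ) : ℝ) = 2 ^ 2 by norm_num, Real.sqrt_sq (by norm_num)]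
    rw [Stirling.stirlingSeq, h4, Nat.factorial_two]
    have : Real.exp 1 ≠ 0 := (Real.exp_pos 1).ne'
    field_simp
    ring
  calc Stirling.stirlingSeq (2 + j) = Stirling.stirlingSeq (Nat.succ (1 + j)) := by
        congr 1; omega
    _ ≤ Stirling.stirlingSeq (Nat.succ 1) := h
    _ = Real.exp 1 ^ 2 / 4 := h2

private lemma stmt10_stirling_lower (m : ℕ) (hm : 1 ≤ m) :
    Real.sqrt π * Real.sqrt (2 * m) * ((m : ℝ) / Real.exp 1) ^ m ≤ (m.factorial : ℝ) := by
  have h := stmt10_sqrtpi_le_stirlingSeq m hm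
  rw [Stirling.stirlingSeq] at h
  have hpos : 0 < Real.sqrt (2 * m) * ((m : ℝ) / Real.exp 1) ^ m := by
    have : (0:ℝ) < m := by exact_mod_cast hm
    positivity
  rw [le_div_iff₀ hpos] at h
  linarith [h]

private lemma stmt10_stirling_upper (m : ℕ) (hm : 2 ≤ m) :
    (m.factorial : ℝ) ≤ (Real.exp 1 ^ 2 / 4) * (Real.sqrt (2 * m) * ((m : ℝ) / Real.exp 1) ^ m) := by
  have h := stmt10_stirlingSeq_le_two m hm
  rw [Stirling.stirlingSeq] at h
  have hpos : 0 < Real.sqrt (2 * m) * ((m : ℝ) / Real.exp 1) ^ m := by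
    have : (0:ℝ) < m := by exact_mod_cast (by omega : 1 ≤ m)
    positivity
  rw [div_le_iff₀ hpos] at h
  linarith [h]

private lemma stmt10_exp_four_le : Real.exp 1 ^ 4 ≤ 32 * Real.sqrt π := by
  have h8 : Real.exp 1 ^ 8 < 2.7182818286 ^ 8 :=
    pow_lt_pow_left₀ Real.exp_one_lt_d9 (Real.exp_pos 1).le (by norm_num)
  have hb : (2.7182818286:ℝ) ^ 8 < 1024 * 3.141592 := by norm_num
  have hpi : (3.141592:ℝ) < π := Real.pi_gt_d6
  have hs : Real.exp 1 ^ 4 / 32 ≤ Real.sqrt π := by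
    rw [Real.le_sqrt (by positivity) Real.pi_pos.le]
    have : (Real.exp 1 ^ 4 / 32) ^ 2 = Real.exp 1 ^ 8 / 1024 := by ring
    rw [this]
    nlinarith
  linarith

private lemma stmt10_exp_le_sqrt_two_n (n : ℕ) (hn : 4 ≤ n) :
    Real.exp 1 ≤ Real.sqrt (2 * n) := by
  rw [Real.le_sqrt (Real.exp_pos 1).le (by positivity)]
  have hE : Real.exp 1 < 2.7182818286 := Real.exp_one_lt_d9
  have : (8:ℝ) ≤ 2 * n := by
    have : (4:ℝ) ≤ n := by exact_mod_cast hn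
    linarith
  nlinarith [Real.exp_pos 1]

private lemma stmt10_key_edge (n : ℕ) (hn : 2 ≤ n) :
    (n:ℝ) ^ n / Real.sqrt (2 * n) ≤ (n:ℝ) * ((n - 1 : ℕ) : ℝ) ^ (n - 1) := by
  have hnpos : (0:ℝ) < n := by positivity
  have hsn : (0:ℝ) < Real.sqrt (2 * n) := Real.sqrt_pos.mpr (by positivity)
  rw [div_le_iff₀ hsn]
  rcases Nat.lt_or_ge n 4 with h4 | h4
  · interval_cases n
    · have : Real.sqrt (2 * (2:ℕ)) = 2 := by
        rw [show (2 * (2:ℕ) : ℝ) = 2 ^ 2 by norm_num, Real.sqrt_sq (by norm_num)]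
      rw [this]; norm_num
    · have h6 : (9/4 : ℝ) ≤ Real.sqrt (2 * (3:ℕ)) := by
        rw [Real.le_sqrt (by norm_num) (by norm_num)]; norm_num
      norm_num at h6 ⊢
      nlinarith
  · have hn1 : (1:ℝ) ≤ (n:ℝ) - 1 := by
      have : (2:ℝ) ≤ n := by exact_mod_cast hn
      linarith
    have hm : (0:ℝ) < (n:ℝ) - 1 := by linarith
    have hcast : ((n - 1 : ℕ) : ℝ) = (n:ℝ) - 1 := by
      rw [Nat.cast_sub (by omega)]; norm_num
    have h1 : (n:ℝ) / ((n:ℝ) - 1) ≤ Real.exp (1 / ((n:ℝ) - 1)) := by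
      have := Real.add_one_le_exp (1 / ((n:ℝ) - 1))
      have heq : (n:ℝ) / ((n:ℝ) - 1) = 1 / ((n:ℝ) - 1) + 1 := by field_simp; ring
      linarith [heq ▸ this]
    have h2 : ((n:ℝ) / ((n:ℝ) - 1)) ^ (n - 1) ≤ Real.exp 1 := by
      calc ((n:ℝ) / ((n:ℝ) - 1)) ^ (n - 1) ≤ Real.exp (1 / ((n:ℝ) - 1)) ^ (n - 1) :=
            pow_le_pow_left₀ (by positivity) h1 _
        _ = Real.exp (((n - 1 : ℕ) : ℝ) * (1 / ((n:ℝ) - 1))) := (Real.exp_nat_mul _ _).symm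
        _ = Real.exp 1 := by rw [hcast]; congr 1; field_simp
    have hpow : (n:ℝ) ^ n = (n:ℝ) * (((n:ℝ) - 1) ^ (n - 1) * ((n:ℝ) / ((n:ℝ) - 1)) ^ (n - 1)) := by
      rw [← mul_pow]
      have : ((n:ℝ) - 1) * ((n:ℝ) / ((n:ℝ) - 1)) = n := by field_simp
      rw [this]
      conv_rhs => rw [← pow_succ']
      congr 1
      omega
    calc (n:ℝ) ^ n = (n:ℝ) * (((n:ℝ) - 1) ^ (n - 1) * ((n:ℝ) / ((n:ℝ) - 1)) ^ (n - 1)) := hpow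
      _ ≤ (n:ℝ) * (((n:ℝ) - 1) ^ (n - 1) * Real.sqrt (2 * n)) := by
          have hle : ((n:ℝ) / ((n:ℝ) - 1)) ^ (n - 1) ≤ Real.sqrt (2 * n) :=
            h2.trans (stmt10_exp_le_sqrt_two_n n h4)
          have h1pos : (0:ℝ) ≤ ((n:ℝ) - 1) ^ (n - 1) := by positivity
          gcongr
      _ = (n:ℝ) * ((n - 1 : ℕ) : ℝ) ^ (n - 1) * Real.sqrt (2 * n) := by rw [hcast]; ring

private lemma stmt10_key_main (n k : ℕ) (hk2 : 2 ≤ k) (hkn : k + 2 ≤ n) :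
    (n:ℝ) ^ n / Real.sqrt (2 * n) ≤
      (n.choose k : ℝ) * (k:ℝ) ^ k * ((n - k : ℕ) : ℝ) ^ (n - k) := by
  have hkn' : k ≤ n := by omega
  have hn1 : 1 ≤ n := by omega
  set E := Real.exp 1 with hE
  have hEpos : 0 < E := Real.exp_pos 1
  set K : ℝ := (k:ℝ) ^ k * ((n - k : ℕ) : ℝ) ^ (n - k) with hK
  have hkpos : (0:ℝ) < k := by exact_mod_cast (by omega : 0 < k)
  have hmpos : (0:ℝ) < ((n - k : ℕ) : ℝ) := by exact_mod_cast (by omega : 0 < n - k)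
  have hnpos : (0:ℝ) < n := by exact_mod_cast (by omega : 0 < n)
  have hKpos : 0 < K := by positivity
  set sn := Real.sqrt (2 * n) with hsn'
  set sk := Real.sqrt (2 * k) with hsk'
  set sm := Real.sqrt (2 * (n - k : ℕ)) with hsm'
  set sp := Real.sqrt π with hsp'
  have hsn : (0:ℝ) < sn := Real.sqrt_pos.mpr (by positivity)
  have hsk : (0:ℝ) < sk := Real.sqrt_pos.mpr (by positivity)
  have hsm : (0:ℝ) < sm := Real.sqrt_pos.mpr (by positivity)
  have hspi : (0:ℝ) < sp := Real.sqrt_pos.mpr Real.pi_pos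
  have h2n : sn * sn = 2 * n := Real.mul_self_sqrt (by positivity)
  have h1 : sp * sn * ((n:ℝ) ^ n / E ^ n) ≤ (n.factorial : ℝ) := by
    have := stmt10_stirling_lower n hn1
    rwa [div_pow] at this
  have h2 : (k.factorial : ℝ) * ((n - k).factorial : ℝ) ≤
      (E ^ 2 / 4) ^ 2 * (sk * sm) * (K / E ^ n) := by
    have hu1 := stmt10_stirling_upper k hk2
    have hu2 := stmt10_stirling_upper (n - k) (by omega)
    calc (k.factorial : ℝ) * ((n - k).factorial : ℝ)
        ≤ ((E ^ 2 / 4) * (sk * ((k:ℝ) / E) ^ k)) *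
          ((E ^ 2 / 4) * (sm * (((n - k : ℕ):ℝ) / E) ^ (n - k))) :=
          mul_le_mul hu1 hu2 (by positivity) (by positivity)
      _ = (E ^ 2 / 4) ^ 2 * (sk * sm) * (K / (E ^ k * E ^ (n - k))) := by
          rw [div_pow, div_pow, hK]
          field_simp
      _ = (E ^ 2 / 4) ^ 2 * (sk * sm) * (K / E ^ n) := by
          rw [← pow_add, Nat.add_sub_cancel' hkn']
  have h3 : (E ^ 2 / 4) ^ 2 * (sk * sm) ≤ 2 * sp * n := by
    have hprod : sk * sm ≤ (n:ℝ) := by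
      rw [hsk', hsm', ← Real.sqrt_mul (by positivity)]
      calc Real.sqrt (2 * k * (2 * ((n - k : ℕ):ℝ))) ≤ Real.sqrt ((n:ℝ) ^ 2) := by
            apply Real.sqrt_le_sqrt
            have hc : ((n - k : ℕ):ℝ) = (n:ℝ) - k := by rw [Nat.cast_sub hkn']
            rw [hc]
            nlinarith [sq_nonneg ((n:ℝ) - 2 * k)]
        _ = (n:ℝ) := Real.sqrt_sq hnpos.le
    have hc2 : (E ^ 2 / 4) ^ 2 ≤ 2 * sp := by
      have he : (E ^ 2 / 4) ^ 2 = E ^ 4 / 16 := by ring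
      rw [he]
      linarith [stmt10_exp_four_le]
    calc (E ^ 2 / 4) ^ 2 * (sk * sm) ≤ (2 * sp) * (n:ℝ) :=
          mul_le_mul hc2 hprod (by positivity) (by positivity)
      _ = 2 * sp * n := by ring
  have hstep1 : (sp * sn * ((n:ℝ) ^ n / E ^ n)) / ((2 * sp * n) * (K / E ^ n)) * K
      = sn * (n:ℝ) ^ n / (2 * n) := by
    field_simp
  have hfin : (n:ℝ) ^ n / sn ≤ (n.factorial : ℝ) /
      ((k.factorial : ℝ) * ((n - k).factorial : ℝ)) * K := by
    calc (n:ℝ) ^ n / sn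
        = (sp * sn * ((n:ℝ) ^ n / E ^ n)) / ((2 * sp * n) * (K / E ^ n)) * K := by
          rw [hstep1, div_eq_div_iff hsn.ne' (by positivity : (2 * (n:ℝ)) ≠ 0)]
          linear_combination (-((n:ℝ) ^ n)) * h2n
      _ ≤ (n.factorial : ℝ) / ((E ^ 2 / 4) ^ 2 * (sk * sm) * (K / E ^ n)) * K := by
          gcongr
      _ ≤ (n.factorial : ℝ) / ((k.factorial : ℝ) * ((n - k).factorial : ℝ)) * K := by
          gcongr
  rw [Nat.cast_choose ℝ hkn']
  calc (n:ℝ) ^ n / sn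
      ≤ (n.factorial : ℝ) / ((k.factorial : ℝ) * ((n - k).factorial : ℝ)) * K := hfin
    _ = (n.factorial : ℝ) / ((k.factorial : ℝ) * ((n - k).factorial : ℝ)) * (k:ℝ) ^ k *
        ((n - k : ℕ) : ℝ) ^ (n - k) := by rw [hK]; ring

private lemma stmt10_key (n k : ℕ) (hn : 1 ≤ n) (hk : k ≤ n) :
    (n:ℝ) ^ n / Real.sqrt (2 * n) ≤
      (n.choose k : ℝ) * (k:ℝ) ^ k * ((n - k : ℕ) : ℝ) ^ (n - k) := by
  have hnpos : (0:ℝ) < n := by exact_mod_cast hn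
  have hn1R : (1:ℝ) ≤ n := by exact_mod_cast hn
  have hsn1 : (1:ℝ) ≤ Real.sqrt (2 * n) := by
    rw [show (1:ℝ) = Real.sqrt 1 from (Real.sqrt_one).symm]
    apply Real.sqrt_le_sqrt
    linarith
  have hself : (n:ℝ) ^ n / Real.sqrt (2 * n) ≤ (n:ℝ) ^ n :=
    div_le_self (by positivity) hsn1
  by_cases h0 : k = 0
  · subst h0
    simpa using hself
  by_cases hkn : k = n
  · subst hkn
    simpa using hself
  have hn2 : 2 ≤ n := by omega
  by_cases h1 : k = 1
  · subst h1
    simpa using stmt10_key_edge n hn2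
  by_cases h2 : k = n - 1
  · subst h2
    rw [Nat.choose_symm (by omega), Nat.choose_one_right,
      show n - (n - 1) = 1 by omega]
    simpa using stmt10_key_edge n hn2
  exact stmt10_key_main n k (by omega) (by omega)

end Stmt10Aux

/-- Binary KL divergence `D(a‖b) = a·log(a/b) + (1-a)·log((1-a)/(1-b))`. -/
noncomputable def klBern (a b : ℝ) : ℝ :=
  a * Real.log (a / b) + (1 - a) * Real.log ((1 - a) / (1 - b))

section Stmt10Aux2
open Real

private lemma stmt10_kl_identity (n δ : ℕ) (q : ℝ) (hq0 : 0 < q) (hq1 : q < 1)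
    (hδ1 : 1 ≤ δ) (hδn : δ ≤ n) :
    Real.exp (-(n : ℝ) * klBern ((δ : ℝ) / n) q) =
      q ^ δ * (1 - q) ^ (n - δ) *
        ((n:ℝ) ^ n / ((δ:ℝ) ^ δ * ((n - δ : ℕ) : ℝ) ^ (n - δ))) := by
  have hq1' : (0:ℝ) < 1 - q := by linarith
  by_cases hd : δ = n
  · subst hd
    have hnne : ((δ:ℝ)) ≠ 0 := by
      have : (0:ℝ) < δ := by exact_mod_cast hδ1
      exact this.ne'
    rw [Nat.sub_self]
    simp only [pow_zero, Nat.cast_zero, mul_one]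
    rw [klBern, div_self hnne]
    simp only [sub_self, zero_mul, add_zero, one_mul]
    rw [Real.log_div one_ne_zero hq0.ne', Real.log_one]
    rw [show -(δ:ℝ) * (0 - Real.log q) = (δ:ℝ) * Real.log q by ring]
    rw [Real.exp_nat_mul, Real.exp_log hq0]
    field_simp
  · obtain ⟨m, rfl⟩ : ∃ m, n = δ + m := ⟨n - δ, by omega⟩
    have hm1 : 1 ≤ m := by omega
    have hmR : (0:ℝ) < m := by exact_mod_cast hm1
    have hδR : (0:ℝ) < δ := by exact_mod_cast hδ1
    rw [show δ + m - δ = m from by omega]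
    push_cast
    have hnR' : (0:ℝ) < (δ:ℝ) + m := by positivity
    have hsub : (1:ℝ) - (δ:ℝ) / ((δ:ℝ) + m) = (m:ℝ) / ((δ:ℝ) + m) := by
      field_simp
      ring
    have hkl : -((δ:ℝ) + m) * klBern ((δ:ℝ) / ((δ:ℝ) + m)) q =
        (δ:ℝ) * Real.log (((δ:ℝ) + m) * q / δ) +
        (m:ℝ) * Real.log (((δ:ℝ) + m) * (1 - q) / m) := by
      rw [klBern, hsub]
      rw [Real.log_div (by positivity : ((δ:ℝ)/((δ:ℝ)+m)) ≠ 0) hq0.ne',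
        Real.log_div (by positivity : ((m:ℝ)/((δ:ℝ)+m)) ≠ 0) hq1'.ne',
        Real.log_div hδR.ne' hnR'.ne', Real.log_div hmR.ne' hnR'.ne',
        Real.log_div (by positivity : ((δ:ℝ)+m) * q ≠ 0) hδR.ne',
        Real.log_div (by positivity : ((δ:ℝ)+m) * (1-q) ≠ 0) hmR.ne',
        Real.log_mul hnR'.ne' hq0.ne', Real.log_mul hnR'.ne' hq1'.ne']
      field_simp
      ring
    rw [hkl, Real.exp_add, Real.exp_nat_mul, Real.exp_nat_mul,
      Real.exp_log (by positivity), Real.exp_log (by positivity)]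
    rw [div_pow, div_pow, mul_pow, mul_pow, pow_add]
    field_simp

end Stmt10Aux2

/-- Anti-concentration (reverse Chernoff) for `S ~ Binomial(n, q)` with
`q·n < δ ≤ n`: `P(S ≥ δ) ≥ P(S = δ) ≥ (1/√(2n))·exp(-n·D(δ/n ‖ q))`. -/
theorem stmt10 (n : ℕ) (hn : 1 ≤ n) (q : ℝ) (hq0 : 0 < q) (hq1 : q < 1)
    (δ : ℕ) (hδ : q * n < δ) (hδn : δ ≤ n) :
    (1 / Real.sqrt (2 * n)) * Real.exp (-(n : ℝ) * klBern ((δ : ℝ) / n) q) ≤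
      (n.choose δ : ℝ) * q ^ δ * (1 - q) ^ (n - δ) ∧
    (n.choose δ : ℝ) * q ^ δ * (1 - q) ^ (n - δ) ≤
      ∑ i ∈ Finset.Icc δ n, (n.choose i : ℝ) * q ^ i * (1 - q) ^ (n - i) := by
  have hq1' : (0:ℝ) < 1 - q := by linarith
  have hδ1 : 1 ≤ δ := by
    by_contra h
    have : δ = 0 := by omega
    subst this
    have hnR : (0:ℝ) < n := by exact_mod_cast hn
    simp only [Nat.cast_zero] at hδ
    nlinarith
  constructor
  · rw [stmt10_kl_identity n δ q hq0 hq1 hδ1 hδn]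
    have hkey := stmt10_key n δ hn hδn
    have hδR : (0:ℝ) < δ := by exact_mod_cast hδ1
    have hmR : (0:ℝ) ≤ ((n - δ : ℕ) : ℝ) := by positivity
    have hD : (0:ℝ) < (δ:ℝ) ^ δ * ((n - δ : ℕ) : ℝ) ^ (n - δ) := by
      have : (0:ℝ) < ((n - δ : ℕ) : ℝ) ^ (n - δ) := by
        rcases Nat.eq_or_lt_of_le hδn with h | h
        · rw [show n - δ = 0 from by omega]
          norm_num
        · have : (0:ℝ) < ((n - δ : ℕ) : ℝ) := by
            exact_mod_cast (by omega : 0 < n - δ)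
          positivity
      positivity
    set D : ℝ := (δ:ℝ) ^ δ * ((n - δ : ℕ) : ℝ) ^ (n - δ) with hDdef
    set P : ℝ := q ^ δ * (1 - q) ^ (n - δ) with hPdef
    have hP : (0:ℝ) < P := by positivity
    calc (1 / Real.sqrt (2 * n)) * (P * ((n:ℝ) ^ n / D))
        = ((n:ℝ) ^ n / Real.sqrt (2 * n)) * (P / D) := by ring
      _ ≤ ((n.choose δ : ℝ) * (δ:ℝ) ^ δ * ((n - δ : ℕ) : ℝ) ^ (n - δ)) * (P / D) := by
          have hPD : (0:ℝ) ≤ P / D := by positivity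
          exact mul_le_mul_of_nonneg_right hkey hPD
      _ = ((n.choose δ : ℝ) * D) * (P / D) := by rw [hDdef]; ring
      _ = (n.choose δ : ℝ) * q ^ δ * (1 - q) ^ (n - δ) := by
          rw [hPdef]
          field_simp
  · apply Finset.single_le_sum (f := fun i => (n.choose i : ℝ) * q ^ i * (1 - q) ^ (n - i))
    · intro i _
      positivity
    · rw [Finset.mem_Icc]
      exact ⟨le_refl δ, hδn⟩
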